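/- Let f be a quadratic form on ℝ^{n+1} of signature (n,1) with polar bilinear form B(x,y) = (f(x+y) − f(x) − f(y))/2, and let e, e' ∈ ℝ^{n+1} be linearly independent vectors with f(e) > 0 and f(e') > 0. Then there exists a vector v ∈ ℝ^{n+1} with B(v,e) = 0, B(v,e') = 0 and f(v) < 0 if and only if B(e,e')^2 < f(e)·f(e'). -/

import Mathlib

namespace Paper

open Matrix

/-- Value at `x` of the quadratic form with Gram matrix `Q`. -/
def qeval {m : ℕ} {R : Type*} [CommRing R] (Q : Matrix (Fin m) (Fin m) R) (x : Fin m → R) : R :=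
  x ⬝ᵥ (Q *ᵥ x)

/-- The polar bilinear form `B(x,y) = (f(x+y) - f(x) - f(y))/2` of the quadratic form
with Gram matrix `Q`. -/
def qpolar {m : ℕ} {K : Type*} [Field K] (Q : Matrix (Fin m) (Fin m) K) (x y : Fin m → K) : K :=
  (qeval Q (x + y) - qeval Q x - qeval Q y) / 2

/-- A real quadratic form (given by its Gram matrix `Q`) has signature `(r,s)`:
`r + s = m` and it is linearly equivalent over `ℝ` to
`x_1^2 + ... + x_r^2 - x_{r+1}^2 - ... - x_m^2`. -/
def RealSignature {m : ℕ} (Q : Matrix (Fin m) (Fin m) ℝ) (r s : ℕ) : Prop :=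
  r + s = m ∧ ∃ T : Matrix (Fin m) (Fin m) ℝ, T.det ≠ 0 ∧
    ∀ x : Fin m → ℝ, qeval Q (T *ᵥ x) = ∑ i : Fin m, (if (i : ℕ) < r then (x i)^2 else -(x i)^2)

/-- A rational quadratic form has signature `(r,s)` if it does as a real quadratic form. -/
def HasSignature {m : ℕ} (Q : Matrix (Fin m) (Fin m) ℚ) (r s : ℕ) : Prop :=
  RealSignature (Q.map (Rat.cast : ℚ → ℝ)) r s

/-- The rational quadratic form `F` (in `n` variables) represents the rational quadratic
form `G` (in `k` variables): after a linear change of coordinates over `ℚ`,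
`F(x_1,...,x_n) = G(x_1,...,x_k) + H(x_{k+1},...,x_n)` for some rational quadratic form `H`. -/
def Represents {n k : ℕ} (F : Matrix (Fin n) (Fin n) ℚ) (G : Matrix (Fin k) (Fin k) ℚ) : Prop :=
  ∃ (m : ℕ) (hm : n = k + m) (H : Matrix (Fin m) (Fin m) ℚ) (T : Matrix (Fin n) (Fin n) ℚ),
    T.det ≠ 0 ∧ ∀ (x : Fin k → ℚ) (y : Fin m → ℚ),
      qeval F (T *ᵥ (Fin.append x y ∘ Fin.cast hm)) = qeval G x + qeval H y

/-- The group `O(f, A)` of matrices in `GL(m, A)` preserving the quadratic form `f`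
(with Gram matrix `Q` over `K ⊇ A`): those `M` with `f(Mx) = f(x)` for all `x`. -/
def ortho {m : ℕ} (A : Type*) [CommRing A] {K : Type*} [Field K] [Algebra A K]
    (Q : Matrix (Fin m) (Fin m) K) : Subgroup (GL (Fin m) A) where
  carrier := { M | ∀ x : Fin m → K,
      qeval Q (((M : Matrix (Fin m) (Fin m) A).map (algebraMap A K)) *ᵥ x) = qeval Q x }
  one_mem' := by
    intro x
    have h1 : ((1 : GL (Fin m) A) : Matrix (Fin m) (Fin m) A).map (algebraMap A K) = 1 := by
      simp [Matrix.map_one]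
    rw [h1, Matrix.one_mulVec]
  mul_mem' := by
    intro a b ha hb x
    have h : ((a * b : GL (Fin m) A) : Matrix (Fin m) (Fin m) A).map (algebraMap A K)
        = ((a : Matrix (Fin m) (Fin m) A).map (algebraMap A K)) *
          ((b : Matrix (Fin m) (Fin m) A).map (algebraMap A K)) := by
      rw [Units.val_mul, Matrix.map_mul]
    rw [h, ← Matrix.mulVec_mulVec, ha, hb]
  inv_mem' := by
    intro a ha x
    set M := ((a : Matrix (Fin m) (Fin m) A).map (algebraMap A K)) with hM
    set N := (((a⁻¹ : GL (Fin m) A) : Matrix (Fin m) (Fin m) A).map (algebraMap A K)) with hN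
    have hMN : M * N = 1 := by
      rw [hM, hN, ← Matrix.map_mul]
      have : (a : Matrix (Fin m) (Fin m) A) * ((a⁻¹ : GL (Fin m) A) : Matrix (Fin m) (Fin m) A)
          = 1 := a.mul_inv
      rw [this]
      simp [Matrix.map_one]
    have ha' : ∀ y : Fin m → K, qeval Q (M *ᵥ y) = qeval Q y := ha
    calc qeval Q (N *ᵥ x) = qeval Q (M *ᵥ (N *ᵥ x)) := (ha' (N *ᵥ x)).symm
      _ = qeval Q ((M * N) *ᵥ x) := by rw [Matrix.mulVec_mulVec]
      _ = qeval Q x := by rw [hMN, Matrix.one_mulVec]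

/-- `O(f, ℤ)` for a rational quadratic form `f` with Gram matrix `Q`. -/
abbrev OZ {m : ℕ} (Q : Matrix (Fin m) (Fin m) ℚ) : Subgroup (GL (Fin m) ℤ) := ortho ℤ Q

/-- A group is finitely presented: it is a quotient of a finitely generated free group by
the normal closure of a finite set of relators. -/
def IsFinitelyPresented (G : Type*) [Group G] : Prop :=
  ∃ (n : ℕ) (rels : Set (FreeGroup (Fin n))), rels.Finite ∧ Nonempty (PresentedGroup rels ≃* G)

/-- A group is coherent if each of its finitely generated subgroups is finitely presented. -/
def IsCoherent (G : Type*) [Group G] : Prop :=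
  ∀ H : Subgroup G, Group.FG H → IsFinitelyPresented H

/-- Two groups are abstractly commensurable if they contain isomorphic
subgroups of finite index. -/
def AbstractlyCommensurable (G H : Type*) [Group G] [Group H] : Prop :=
  ∃ (G' : Subgroup G) (H' : Subgroup H), G'.FiniteIndex ∧ H'.FiniteIndex ∧ Nonempty (G' ≃* H')

/-- The form `q₃ = -x₀² + x₁² + x₂² + x₃²`. -/
def q3 : Matrix (Fin 4) (Fin 4) ℚ := Matrix.diagonal ![-1, 1, 1, 1]


section Helpers

open Finset

lemma qpolar_eq {m : ℕ} (Q : Matrix (Fin m) (Fin m) ℝ) (x y : Fin m → ℝ) :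
    qpolar Q x y = (x ⬝ᵥ (Q *ᵥ y) + y ⬝ᵥ (Q *ᵥ x)) / 2 := by
  simp only [qpolar, qeval, Matrix.mulVec_add, dotProduct_add, add_dotProduct]
  ring

lemma qpolar_comm' {m : ℕ} (Q : Matrix (Fin m) (Fin m) ℝ) (x y : Fin m → ℝ) :
    qpolar Q x y = qpolar Q y x := by rw [qpolar_eq, qpolar_eq]; ring

lemma qpolar_self {m : ℕ} (Q : Matrix (Fin m) (Fin m) ℝ) (x : Fin m → ℝ) :
    qpolar Q x x = qeval Q x := by rw [qpolar_eq, qeval]; ring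

lemma qpolar_expand {m : ℕ} (Q : Matrix (Fin m) (Fin m) ℝ) (u e e' x : Fin m → ℝ) (α β : ℝ) :
    qpolar Q (u - α • e - β • e') x =
      qpolar Q u x - α * qpolar Q e x - β * qpolar Q e' x := by
  simp only [qpolar_eq, Matrix.mulVec_sub, Matrix.mulVec_smul, sub_dotProduct,
    dotProduct_sub, smul_dotProduct, dotProduct_smul, smul_eq_mul]
  ring

lemma qeval_expand {m : ℕ} (Q : Matrix (Fin m) (Fin m) ℝ) (u e e' : Fin m → ℝ) (α β : ℝ) :
    qeval Q (u - α • e - β • e') =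
      qeval Q u - 2*α * qpolar Q u e - 2*β * qpolar Q u e' + α^2 * qeval Q e
        + 2*α*β * qpolar Q e e' + β^2 * qeval Q e' := by
  simp only [qeval, qpolar_eq, Matrix.mulVec_sub, Matrix.mulVec_smul, sub_dotProduct,
    dotProduct_sub, smul_dotProduct, dotProduct_smul, smul_eq_mul]
  ring

lemma qeval_comb {m : ℕ} (Q : Matrix (Fin m) (Fin m) ℝ) (e e' : Fin m → ℝ) (α β : ℝ) :
    qeval Q (α • e + β • e') =
      α^2 * qeval Q e + 2*α*β * qpolar Q e e' + β^2 * qeval Q e' := by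
  simp only [qeval, qpolar_eq, Matrix.mulVec_add, Matrix.mulVec_smul, add_dotProduct,
    dotProduct_add, smul_dotProduct, dotProduct_smul, smul_eq_mul]
  ring

lemma qpolar_comb_left {m : ℕ} (Q : Matrix (Fin m) (Fin m) ℝ) (e e' x : Fin m → ℝ) (α β : ℝ) :
    qpolar Q (α • e + β • e') x = α * qpolar Q e x + β * qpolar Q e' x := by
  simp only [qpolar_eq, Matrix.mulVec_add, Matrix.mulVec_smul, add_dotProduct,
    dotProduct_add, smul_dotProduct, dotProduct_smul, smul_eq_mul]
  ring

/-- The standard Lorentz form in `n + 1` variables. -/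
noncomputable def Lz (n : ℕ) (x : Fin (n+1) → ℝ) : ℝ :=
  ∑ i : Fin (n+1), if (i : ℕ) < n then (x i)^2 else -(x i)^2

/-- The spatial (Euclidean) part of the Lorentz pairing. -/
noncomputable def Sz (n : ℕ) (a b : Fin (n+1) → ℝ) : ℝ :=
  ∑ i : Fin n, a i.castSucc * b i.castSucc

lemma Lz_eq (n : ℕ) (x : Fin (n+1) → ℝ) :
    Lz n x = Sz n x x - (x (Fin.last n))^2 := by
  rw [Lz, Fin.sum_univ_castSucc]
  simp [Sz, Fin.is_lt, sq]
  ring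

lemma Sz_add (n : ℕ) (a b : Fin (n+1) → ℝ) :
    Sz n (a + b) (a + b) = Sz n a a + 2 * Sz n a b + Sz n b b := by
  have h : ∀ i ∈ Finset.univ (α := Fin n),
      (a + b) i.castSucc * (a + b) i.castSucc
        = a i.castSucc * a i.castSucc
          + (2 * (a i.castSucc * b i.castSucc) + b i.castSucc * b i.castSucc) := by
    intro i _; simp only [Pi.add_apply]; ring
  rw [Sz, Finset.sum_congr rfl h, Finset.sum_add_distrib, Finset.sum_add_distrib,
    ← Finset.mul_sum]
  rw [Sz, Sz, Sz]
  ring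

lemma Lz_polar (n : ℕ) (a b : Fin (n+1) → ℝ) :
    (Lz n (a + b) - Lz n a - Lz n b) / 2 = Sz n a b - a (Fin.last n) * b (Fin.last n) := by
  rw [Lz_eq, Lz_eq, Lz_eq, Sz_add]
  simp only [Pi.add_apply]
  ring

lemma Sz_nonneg (n : ℕ) (b : Fin (n+1) → ℝ) : 0 ≤ Sz n b b :=
  Finset.sum_nonneg fun _ _ => mul_self_nonneg _

/-- Key Lorentz geometry fact: a nonzero vector orthogonal to a timelike vector
is spacelike. -/
lemma lorentz_key (n : ℕ) (a b : Fin (n+1) → ℝ) (ha : Lz n a < 0)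
    (hab : Sz n a b = a (Fin.last n) * b (Fin.last n)) (hb : b ≠ 0) : 0 < Lz n b := by
  rw [Lz_eq] at ha ⊢
  have hcs : (Sz n a b)^2 ≤ Sz n a a * Sz n b b := by
    have := Finset.sum_mul_sq_le_sq_mul_sq Finset.univ (fun i : Fin n => a i.castSucc)
      (fun i : Fin n => b i.castSucc)
    simpa [Sz, sq] using this
  have hSa : 0 ≤ Sz n a a := Sz_nonneg n a
  have hSb : 0 ≤ Sz n b b := Sz_nonneg n b
  by_cases hbn : b (Fin.last n) = 0
  · obtain ⟨j, hj⟩ := Function.ne_iff.mp hb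
    have hjl : j ≠ Fin.last n := by rintro rfl; exact hj hbn
    obtain ⟨i, rfl⟩ := Fin.exists_castSucc_eq.mpr hjl
    have hpos : 0 < Sz n b b :=
      Finset.sum_pos' (fun k _ => mul_self_nonneg _)
        ⟨i, Finset.mem_univ i, mul_self_pos.mpr hj⟩
    nlinarith [hpos]
  · have h1 : (a (Fin.last n))^2 * (b (Fin.last n))^2 ≤ Sz n a a * Sz n b b := by
      calc (a (Fin.last n))^2 * (b (Fin.last n))^2 = (Sz n a b)^2 := by rw [hab]; ring
        _ ≤ Sz n a a * Sz n b b := hcs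
    have hbn2 : 0 < (b (Fin.last n))^2 := by positivity
    nlinarith [sq_nonneg (a (Fin.last n))]

end Helpers

/-- For a real quadratic form of signature `(n,1)` and linearly independent
spacelike vectors `e, e'`, there is a common orthogonal negative vector iff
`B(e,e')² < f(e)·f(e')`. -/
theorem common_negative_orthogonal_iff (n : ℕ)
    (Q : Matrix (Fin (n + 1)) (Fin (n + 1)) ℝ) (hQsymm : Q.IsSymm)
    (hsig : RealSignature Q n 1) (e e' : Fin (n + 1) → ℝ)
    (hli : LinearIndependent ℝ ![e, e'])
    (he : 0 < qeval Q e) (he' : 0 < qeval Q e') :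
    (∃ v : Fin (n + 1) → ℝ, qpolar Q v e = 0 ∧ qpolar Q v e' = 0 ∧ qeval Q v < 0) ↔
      (qpolar Q e e') ^ 2 < qeval Q e * qeval Q e' := by
  obtain ⟨-, T, hT, hTeq⟩ := hsig
  have hTsurj : ∀ y : Fin (n+1) → ℝ, ∃ x, T *ᵥ x = y := fun y =>
    ⟨T⁻¹ *ᵥ y, by rw [Matrix.mulVec_mulVec, Matrix.mul_nonsing_inv _ (isUnit_iff_ne_zero.mpr hT),
      Matrix.one_mulVec]⟩
  have hQT : ∀ x, qeval Q (T *ᵥ x) = Lz n x := fun x => hTeq x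
  have hpolarT : ∀ a b, qpolar Q (T *ᵥ a) (T *ᵥ b)
      = Sz n a b - a (Fin.last n) * b (Fin.last n) := by
    intro a b
    rw [qpolar, ← Matrix.mulVec_add, hQT, hQT, hQT, Lz_polar]
  constructor
  · rintro ⟨v, hv1, hv2, hv3⟩
    set B := qpolar Q e e' with hB
    set w : Fin (n+1) → ℝ := (-B) • e + qeval Q e • e' with hw
    have hw0 : w ≠ 0 := by
      intro h
      have := (LinearIndependent.pair_iff.mp hli (-B) (qeval Q e) (by rw [← hw, h])).2
      exact absurd this (ne_of_gt he)
    obtain ⟨a, ha⟩ := hTsurj v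
    obtain ⟨b, hb⟩ := hTsurj w
    have hLa : Lz n a < 0 := by rw [← hQT, ha]; exact hv3
    have hpvw : qpolar Q v w = 0 := by
      rw [qpolar_comm', hw, qpolar_comb_left, qpolar_comm' Q e v, qpolar_comm' Q e' v,
        hv1, hv2]
      ring
    have hb0 : b ≠ 0 := by
      rintro rfl
      rw [Matrix.mulVec_zero] at hb
      exact hw0 hb.symm
    have hSab : Sz n a b = a (Fin.last n) * b (Fin.last n) := by
      have h := hpolarT a b
      rw [ha, hb, hpvw] at h
      linarith
    have hLb : 0 < Lz n b := lorentz_key n a b hLa hSab hb0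
    have hqw : 0 < qeval Q w := by rw [← hb, hQT]; exact hLb
    rw [hw, qeval_comb] at hqw
    nlinarith [hqw, he]
  · intro hlt
    set u : Fin (n+1) → ℝ := T *ᵥ Pi.single (Fin.last n) 1 with hu_def
    have hsingle : ∀ i : Fin n, (Pi.single (Fin.last n) 1 : Fin (n+1) → ℝ) i.castSucc = 0 := by
      intro i
      have hne : i.castSucc ≠ Fin.last n := (Fin.castSucc_lt_last i).ne
      simp [Pi.single_apply, hne]
    have hu : qeval Q u = -1 := by
      rw [hu_def, hQT, Lz_eq]
      simp [Sz, hsingle, Pi.single_eq_same]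
    set fe := qeval Q e with hfe
    set fe' := qeval Q e' with hfe'
    set B := qpolar Q e e' with hB
    set Bue := qpolar Q u e with hBue
    set Bue' := qpolar Q u e' with hBue'
    have hD : fe * fe' - B^2 ≠ 0 := by nlinarith [hlt]
    obtain ⟨α, β, hα, hβ⟩ : ∃ α β : ℝ,
        α * fe + β * B = Bue ∧ α * B + β * fe' = Bue' := by
      refine ⟨(fe' * Bue - B * Bue') / (fe * fe' - B^2),
        (fe * Bue' - B * Bue) / (fe * fe' - B^2), ?_, ?_⟩
      · rw [div_mul_eq_mul_div, div_mul_eq_mul_div, ← add_div, div_eq_iff hD]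
        ring
      · rw [div_mul_eq_mul_div, div_mul_eq_mul_div, ← add_div, div_eq_iff hD]
        ring
    refine ⟨u - α • e - β • e', ?_, ?_, ?_⟩
    · rw [qpolar_expand, qpolar_self, qpolar_comm' Q e' e, ← hfe, ← hB, ← hBue]
      linarith
    · rw [qpolar_expand, qpolar_self, ← hfe', ← hB, ← hBue']
      linarith
    · have hE : qeval Q (u - α • e - β • e')
          = -1 - (α^2 * fe + 2*α*β * B + β^2 * fe') := by
        rw [qeval_expand, hu, ← hfe, ← hfe', ← hB, ← hBue, ← hBue', ← hα, ← hβ]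
        ring
      rw [hE]
      have h1 : 0 ≤ β^2 * (fe * fe' - B^2) := mul_nonneg (sq_nonneg β) (by linarith)
      nlinarith [h1, sq_nonneg (α * fe + β * B), he]


end Paper
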